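/- Let n be even and A_n the automaton on states q_1,...,q_n with circulating letter a (q_i·a = q_{i+1 mod n}) and letter b given by q_i·b = q_i if i ≤ n/2 and q_i·b = q_{n-i+1} if i > n/2. Then A_n is synchronizing (with (ba)^{n/2}b a reset word), and the vector v = (-1,1,-1,...,-1) ∈ ℂ^{n-1} (in the basis {q_i - q_1}) satisfies v·a = -v and v·b = 0, so the line spanned by v is invariant under the word action and the automaton is reducible. -/

import Mathlib

def wordAct {n : ℕ} {A : Type} (δ : Fin n → A → Fin n) (p : Fin n) (u : List A) : Fin n :=
  u.foldl δ p

noncomputable def relDist {n : ℕ} {A : Type} (δ : Fin n → A → Fin n) (a : A) (p q : Fin n) : ℕ :=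
  sInf {k : ℕ | wordAct δ p (List.replicate k a) = q ∨ wordAct δ q (List.replicate k a) = p}

/-- The cyclic successor `q ↦ q + 1 (mod n)` on `Fin n`. -/
def cyc {n : ℕ} (q : Fin n) : Fin n :=
  ⟨(q.val + 1) % n, Nat.mod_lt _ (by have := q.isLt; omega)⟩

def IsCirculating {n : ℕ} {A : Type} (δ : Fin n → A → Fin n) (a : A) : Prop :=
  ∀ q : Fin n, δ q a = cyc q

def IsContracting {n : ℕ} {A : Type} (δ : Fin n → A → Fin n) (a : A) : Prop :=
  ∀ p q : Fin n, 1 < relDist δ a p q →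
    ∃ u : List A, 1 ≤ relDist δ a (wordAct δ p u) (wordAct δ q u) ∧
      relDist δ a (wordAct δ p u) (wordAct δ q u) < relDist δ a p q

def IsWeaklyContractingPair {n : ℕ} {A : Type} (δ : Fin n → A → Fin n) (a : A) (p q : Fin n) : Prop :=
  ∀ m : ℕ, (∀ u : List A, wordAct δ p u ≠ wordAct δ q u →
      m ∣ Nat.gcd (relDist δ a (wordAct δ p u) (wordAct δ q u)) n) → m = 1

def IsWeaklyContracting {n : ℕ} {A : Type} (δ : Fin n → A → Fin n) (a : A) : Prop :=
  ∀ p q : Fin n, p ≠ q → IsWeaklyContractingPair δ a p q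

def IsCongruence {n : ℕ} {A : Type} (δ : Fin n → A → Fin n) (σ : Fin n → Fin n → Prop) : Prop :=
  Equivalence σ ∧ ∀ (p q : Fin n) (u : List A), σ p q → σ (wordAct δ p u) (wordAct δ q u)

def IsSimple {n : ℕ} {A : Type} (δ : Fin n → A → Fin n) : Prop :=
  ∀ σ : Fin n → Fin n → Prop, IsCongruence δ σ → (∀ x y, σ x y → x = y) ∨ (∀ x y, σ x y)

def IsSynchronizing {n : ℕ} {A : Type} (δ : Fin n → A → Fin n) : Prop :=
  ∃ u : List A, ∀ p q : Fin n, wordAct δ p u = wordAct δ q u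

/-- The linear action of a word on `K`-linear combinations of states. -/
def actVec {n : ℕ} {A : Type} {K : Type} [Semiring K]
    (δ : Fin n → A → Fin n) (v : Fin n → K) (u : List A) : Fin n → K :=
  fun j => ∑ i, if wordAct δ i u = j then v i else 0

/-- The automaton `A_n`: `true` (= `a`) is the circulating letter; `false` (= `b`)
fixes the first `n/2` states and sends `q_i` to `q_{n-i+1}` for `i > n/2`
(0-based: `j ↦ n - 1 - j`). -/
def delta19 (n : ℕ) : Fin n → Bool → Fin n :=
  fun q x => if x then cyc q
    else if q.val < n / 2 then q else ⟨n - 1 - q.val, by have := q.isLt; omega⟩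

/-- The vector of `ℂQ` corresponding to `v = (-1, 1, -1, …, -1)` in the basis
`{q_i - q_1}`, namely `j ↦ (-1)^j` in 0-based coordinates. -/
noncomputable def w19 (n : ℕ) : Fin n → ℂ := fun j => (-1) ^ j.val

lemma wordAct_append {n : ℕ} {A : Type} (δ : Fin n → A → Fin n) (p : Fin n) (u v : List A) :
    wordAct δ p (u ++ v) = wordAct δ (wordAct δ p u) v := by
  simp [wordAct, List.foldl_append]

lemma actVec_nil {n : ℕ} {A : Type} {K : Type} [Semiring K] (δ : Fin n → A → Fin n)
    (v : Fin n → K) : actVec δ v ([] : List A) = v := by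
  funext j
  simp [actVec, wordAct]
  convert (Finset.sum_ite_eq' Finset.univ j v).trans (if_pos (Finset.mem_univ j))
  split_ifs <;> simp_all

lemma actVec_append {n : ℕ} {A : Type} {K : Type} [Semiring K] (δ : Fin n → A → Fin n)
    (v : Fin n → K) (u u' : List A) :
    actVec δ v (u ++ u') = actVec δ (actVec δ v u) u' := by
  funext j
  show _ = ∑ k, if wordAct δ k u' = j then (∑ i, if wordAct δ i u = k then v i else 0) else 0
  have h1 : ∀ k : Fin n, (if wordAct δ k u' = j then (∑ i, if wordAct δ i u = k then v i else 0) else 0)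
      = ∑ i, if wordAct δ i u = k then (if wordAct δ k u' = j then v i else 0) else 0 := by
    intro k
    split
    · rfl
    · simp
  rw [Finset.sum_congr rfl (fun k _ => h1 k), Finset.sum_comm]
  apply Finset.sum_congr rfl
  intro i _
  have h2 : ∀ k : Fin n, (if wordAct δ i u = k then (if wordAct δ k u' = j then v i else 0) else 0)
      = if k = wordAct δ i u then (if wordAct δ k u' = j then v i else 0) else 0 := by
    intro k
    by_cases h : wordAct δ i u = k
    · simp [h]
    · simp [h, Ne.symm h]
  rw [Finset.sum_congr rfl (fun k _ => h2 k), Finset.sum_ite_eq' Finset.univ (wordAct δ i u)]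
  simp [wordAct_append, actVec]

lemma actVec_smul {n : ℕ} {A : Type} (δ : Fin n → A → Fin n)
    (c : ℂ) (v : Fin n → ℂ) (u : List A) :
    actVec δ (c • v) u = c • actVec δ v u := by
  funext j
  simp [actVec, Finset.mul_sum, mul_ite]

lemma parity_sum_zero {n : ℕ} (he : Even n) (j : ℕ) (hj : j < n) :
    ((-1 : ℂ)) ^ j + (-1 : ℂ) ^ (n - 1 - j) = 0 := by
  have hn : n % 2 = 0 := Nat.even_iff.mp he
  rcases Nat.even_or_odd j with hpar | hpar
  · have : Odd (n - 1 - j) := by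
      rw [Nat.odd_iff]; rw [Nat.even_iff] at hpar; omega
    rw [hpar.neg_one_pow, this.neg_one_pow]; ring
  · have : Even (n - 1 - j) := by
      rw [Nat.even_iff]; rw [Nat.odd_iff] at hpar; omega
    rw [hpar.neg_one_pow, this.neg_one_pow]; ring

/-- the value of one `ba`-step. -/
lemma step_val {n : ℕ} (hn : 0 < n) (he : Even n) (p : Fin n) :
    (wordAct (delta19 n) p [false, true]).val
      = if p.val < n / 2 then p.val + 1 else n - p.val := by
  have hn2 : n % 2 = 0 := Nat.even_iff.mp he
  have hp := p.isLt
  show ((delta19 n) ((delta19 n) p false) true).val = _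
  have hb : (delta19 n) p false
      = if p.val < n / 2 then p else ⟨n - 1 - p.val, by omega⟩ := by
    simp [delta19]
  have ha : ∀ q : Fin n, (delta19 n) q true = cyc q := fun q => rfl
  by_cases h : p.val < n / 2
  · rw [hb, if_pos h, ha]
    show (p.val + 1) % n = _
    rw [if_pos h, Nat.mod_eq_of_lt (by omega)]
  · rw [hb, if_neg h, ha]
    show (n - 1 - p.val + 1) % n = _
    rw [if_neg h]
    have e : n - 1 - p.val + 1 = n - p.val := by omega
    rw [e, Nat.mod_eq_of_lt (by omega)]

lemma steps_reach {n : ℕ} (hn : 0 < n) (he : Even n) :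
    ∀ (k : ℕ) (p : Fin n), p.val ≤ n / 2 → n / 2 ≤ p.val + k →
      wordAct (delta19 n) p (List.replicate k [false, true]).flatten
        = ⟨n / 2, by have := Nat.even_iff.mp he; omega⟩ := by
  intro k
  induction k with
  | zero =>
    intro p h1 h2
    have : p.val = n / 2 := by omega
    simp only [List.replicate, List.flatten_nil]
    exact Fin.ext this
  | succ k ih =>
    intro p h1 h2
    rw [List.replicate_succ, List.flatten_cons, wordAct_append]
    have hv := step_val hn he p
    have hn2 : n % 2 = 0 := Nat.even_iff.mp he
    have hp := p.isLt
    apply ih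
    · rw [hv]; split <;> omega
    · rw [hv]; split <;> omega

theorem stmt19 (n : ℕ) (hn : 0 < n) (he : Even n) :
    (∀ p q : Fin n,
        wordAct (delta19 n) p ((List.replicate (n / 2) [false, true]).flatten ++ [false])
          = wordAct (delta19 n) q ((List.replicate (n / 2) [false, true]).flatten ++ [false])) ∧
    actVec (delta19 n) (w19 n) [true] = (-1 : ℂ) • w19 n ∧
    actVec (delta19 n) (w19 n) [false] = 0 ∧
    (∀ u : List Bool, ∃ c : ℂ, actVec (delta19 n) (w19 n) u = c • w19 n) := by
  have hn2 : n % 2 = 0 := Nat.even_iff.mp he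
  have hm1 : 1 ≤ n / 2 := by omega
  have hmlt : n / 2 < n := by omega
  -- Part 1: synchronization
  have part1 : ∀ p : Fin n,
      wordAct (delta19 n) p ((List.replicate (n / 2) [false, true]).flatten ++ [false])
        = ⟨n / 2 - 1, by omega⟩ := by
    intro p
    rw [wordAct_append]
    have hflat : wordAct (delta19 n) p (List.replicate (n / 2) [false, true]).flatten
        = ⟨n / 2, hmlt⟩ := by
      obtain ⟨k, hk⟩ : ∃ k, n / 2 = k + 1 := ⟨n / 2 - 1, by omega⟩
      have hrep : List.replicate (n / 2) [false, true]
          = [false, true] :: List.replicate k [false, true] := by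
        rw [hk, List.replicate_succ]
      rw [hrep, List.flatten_cons, wordAct_append]
      have hv := step_val hn he p
      have hp := p.isLt
      have := steps_reach hn he k (wordAct (delta19 n) p [false, true])
        (by rw [hv]; split <;> omega) (by rw [hv]; split <;> omega)
      rw [this]
    rw [hflat]
    show (delta19 n) ⟨n / 2, hmlt⟩ false = _
    simp only [delta19, Bool.false_eq_true, ite_false]
    rw [if_neg (by simp)]
    exact Fin.ext (by simp; omega)
  -- Part 2: action of a
  have part2 : actVec (delta19 n) (w19 n) [true] = (-1 : ℂ) • w19 n := by
    funext j
    have hj := j.isLt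
    show (∑ i, if wordAct (delta19 n) i [true] = j then w19 n i else 0) = _
    have hact : ∀ i : Fin n, wordAct (delta19 n) i [true] = cyc i := fun i => rfl
    set j' : Fin n := ⟨(j.val + n - 1) % n, Nat.mod_lt _ hn⟩ with hj'
    have hcond : ∀ i : Fin n, (wordAct (delta19 n) i [true] = j) ↔ i = j' := by
      intro i
      rw [hact]
      have hi := i.isLt
      constructor
      · intro h
        have hval : (i.val + 1) % n = j.val := congrArg Fin.val h
        apply Fin.ext
        show i.val = (j.val + n - 1) % n
        rcases Nat.lt_or_ge (i.val + 1) n with hlt | hge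
        · rw [Nat.mod_eq_of_lt hlt] at hval
          have e : j.val + n - 1 = i.val + n := by omega
          rw [e, Nat.add_mod_right, Nat.mod_eq_of_lt hi]
        · have h1 : i.val + 1 = n := by omega
          rw [h1, Nat.mod_self] at hval
          have e : j.val + n - 1 = n - 1 := by omega
          rw [e, Nat.mod_eq_of_lt (by omega)]
          omega
      · intro h
        subst h
        apply Fin.ext
        show ((j.val + n - 1) % n + 1) % n = j.val
        by_cases h0 : j.val = 0
        · have e1 : (j.val + n - 1) % n = n - 1 := by
            rw [Nat.mod_eq_of_lt (by omega)]; omega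
          rw [e1]
          have e2 : n - 1 + 1 = n := by omega
          rw [e2, Nat.mod_self, h0]
        · have e1 : (j.val + n - 1) % n = j.val - 1 := by
            have e : j.val + n - 1 = (j.val - 1) + n := by omega
            rw [e, Nat.add_mod_right, Nat.mod_eq_of_lt (by omega)]
          rw [e1]
          have e2 : j.val - 1 + 1 = j.val := by omega
          rw [e2, Nat.mod_eq_of_lt hj]
    rw [Finset.sum_congr rfl (fun i _ => by rw [if_congr (hcond i) rfl rfl]),
      Finset.sum_ite_eq' Finset.univ j']
    simp only [Finset.mem_univ, ite_true, Pi.smul_apply, smul_eq_mul, w19, hj']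
    by_cases h0 : j.val = 0
    · rw [h0]
      have e1 : (0 + n - 1) % n = n - 1 := by
        rw [Nat.mod_eq_of_lt (by omega)]; omega
      rw [e1]
      have hodd : Odd (n - 1) := by rw [Nat.odd_iff]; omega
      rw [hodd.neg_one_pow]
      simp
    · have e1 : (j.val + n - 1) % n = j.val - 1 := by
        have e : j.val + n - 1 = (j.val - 1) + n := by omega
        rw [e, Nat.add_mod_right, Nat.mod_eq_of_lt (by omega)]
      rw [e1]
      have e2 : j.val = (j.val - 1) + 1 := by omega
      conv_rhs => rw [e2]
      rw [pow_succ]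
      ring
  -- Part 3: action of b
  have part3 : actVec (delta19 n) (w19 n) [false] = 0 := by
    funext j
    have hj := j.isLt
    show (∑ i, if wordAct (delta19 n) i [false] = j then w19 n i else 0) = 0
    have hact : ∀ i : Fin n, (wordAct (delta19 n) i [false]).val
        = if i.val < n / 2 then i.val else n - 1 - i.val := by
      intro i
      show ((delta19 n) i false).val = _
      simp only [delta19, Bool.false_eq_true, ite_false]
      split <;> rfl
    by_cases hjm : j.val < n / 2
    · -- preimages are j and ⟨n-1-j⟩
      set j2 : Fin n := ⟨n - 1 - j.val, by omega⟩ with hj2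
      have hne : j ≠ j2 := by
        intro h
        have := congrArg Fin.val h
        simp only [hj2] at this
        omega
      have hcond : ∀ i : Fin n, (if wordAct (delta19 n) i [false] = j then w19 n i else 0)
          = (if i = j then w19 n j else 0) + (if i = j2 then w19 n j2 else 0) := by
        intro i
        have hi := i.isLt
        have hv := hact i
        by_cases h1 : i = j
        · subst h1
          rw [if_pos (Fin.ext (by rw [hv]; simp [hjm])), if_pos rfl, if_neg hne]
          ring
        · by_cases h2 : i = j2
          · subst h2
            rw [if_pos (Fin.ext (by rw [hv]; simp only [hj2]; split <;> omega)),
              if_neg h1, if_pos rfl]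
            ring
          · rw [if_neg, if_neg h1, if_neg h2]
            · ring
            · intro h
              have hvj := congrArg Fin.val h
              rw [hv] at hvj
              rcases lt_or_ge i.val (n / 2) with hlt | hge
              · rw [if_pos hlt] at hvj; exact h1 (Fin.ext hvj)
              · rw [if_neg (by omega)] at hvj
                exact h2 (Fin.ext (by simp only [hj2]; omega))
      rw [Finset.sum_congr rfl (fun i _ => hcond i), Finset.sum_add_distrib,
        Finset.sum_ite_eq' Finset.univ j, Finset.sum_ite_eq' Finset.univ j2]
      simp only [Finset.mem_univ, ite_true, w19, hj2]
      exact parity_sum_zero he j.val hj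
    · -- no preimages
      apply Finset.sum_eq_zero
      intro i _
      rw [if_neg]
      intro h
      have hvj := congrArg Fin.val h
      rw [hact i] at hvj
      have hi := i.isLt
      split at hvj <;> omega
  -- Part 4: invariance
  refine ⟨fun p q => by rw [part1 p, part1 q], part2, part3, ?_⟩
  intro u
  induction u with
  | nil => exact ⟨1, by rw [actVec_nil, one_smul]⟩
  | cons x u ih =>
    obtain ⟨c, hc⟩ := ih
    have hsplit : (x :: u) = [x] ++ u := rfl
    cases x
    · refine ⟨0 * c, ?_⟩
      rw [hsplit, actVec_append, part3]
      have : (0 : Fin n → ℂ) = (0 : ℂ) • w19 n := by simp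
      rw [this, actVec_smul, hc, smul_smul]
    · refine ⟨(-1) * c, ?_⟩
      rw [hsplit, actVec_append, part2, actVec_smul, hc, smul_smul]
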